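/- (Recursive formula, left entry.) Let α and ν be partitions with n parts, let (λ, ρ) = (λ(α,ν), ρ(α,ν)), and let μ be the partition obtained from α by adding one cell in row i (i.e., μ_i = α_i + 1 and μ_k = α_k for k ≠ i, with μ still a partition). If there exists j with 1 ≤ j ≤ n and ν_j − j = α_i − i, then λ(μ,ν) = λ and ρ(μ,ν) is obtained from ρ by adding one cell in row j; moreover in this case ρ(μ,ν)_j = μ_i (the new cell of ρ lies in column μ_i). Otherwise, λ(μ,ν) is obtained from λ by adding one cell in row i, and ρ(μ,ν) = ρ. -/

import Mathlib

/-- A partition with `n` (possibly zero) parts: a weakly decreasing sequence of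
nonnegative integers, recorded 0-indexed, vanishing from index `n` on. -/
def IsPartitionN (n : ℕ) (μ : ℕ → ℕ) : Prop :=
  Antitone μ ∧ ∀ i, n ≤ i → μ i = 0

/-- A partition (finitely many nonzero parts), 0-indexed. -/
def IsPartition (μ : ℕ → ℕ) : Prop :=
  Antitone μ ∧ ∃ N, ∀ i, N ≤ i → μ i = 0

/-- `λ(μ,ν)_k = μ_k − k + #{j : 1 ≤ j ≤ n, ν_j − j ≥ μ_k − k}`, 0-indexed,
so the (k+1)-st part of `λ(μ,ν)`, as an integer. -/
def lamStar (n : ℕ) (μ ν : ℕ → ℕ) (k : ℕ) : ℤ :=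
  (μ k : ℤ) - (k + 1) +
    ((Finset.range n).filter (fun j => (μ k : ℤ) - (k + 1) ≤ (ν j : ℤ) - (j + 1))).card

/-- `ρ(μ,ν)_j = ν_j − j + 1 + #{k : 1 ≤ k ≤ n, μ_k − k > ν_j − j}`, 0-indexed. -/
def rhoStar (n : ℕ) (μ ν : ℕ → ℕ) (j : ℕ) : ℤ :=
  (ν j : ℤ) - (j + 1) + 1 +
    ((Finset.range n).filter (fun k => (ν j : ℤ) - (j + 1) < (μ k : ℤ) - (k + 1))).card

/-- `λ(μ,ν)` as a sequence of natural numbers. -/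
def lamStarN (n : ℕ) (μ ν : ℕ → ℕ) (k : ℕ) : ℕ := (lamStar n μ ν k).toNat

/-- `ρ(μ,ν)` as a sequence of natural numbers. -/
def rhoStarN (n : ℕ) (μ ν : ℕ → ℕ) (k : ℕ) : ℕ := (rhoStar n μ ν k).toNat

/-- The conjugate partition: `μ′_i = #{k : μ_k ≥ i}` (1-indexed), recorded 0-indexed. -/
noncomputable def conjP (μ : ℕ → ℕ) (i : ℕ) : ℕ := {k : ℕ | i + 1 ≤ μ k}.ncard

/-- Remove a full column of height `k`: subtract 1 from the first `k` parts. -/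
def removeCol (k : ℕ) (σ : ℕ → ℕ) : ℕ → ℕ := fun j => if j < k then σ j - 1 else σ j

/-- An LR filling of the skew shape `θ/ν` of type `μ` (all 0-indexed; cell `(i,j)`
is row `i+1`, column `j+1`; the entry `0` marks cells outside the skew shape).
Rows weakly increase, columns strictly increase, the entry `m+1` occurs `μ m`
times, and the reverse reading word (rows top to bottom, each row right to left)
is a lattice permutation. It is required that `ν ⊆ θ`. -/
def IsLRFilling (θ ν μ : ℕ → ℕ) (T : ℕ → ℕ → ℕ) : Prop :=
  (∀ i, ν i ≤ θ i) ∧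
  (∀ i j, ν i ≤ j → j < θ i → 1 ≤ T i j) ∧
  (∀ i j, ¬(ν i ≤ j ∧ j < θ i) → T i j = 0) ∧
  (∀ i j j', ν i ≤ j → j ≤ j' → j' < θ i → T i j ≤ T i j') ∧
  (∀ i i' j, i < i' → ν i ≤ j → j < θ i → ν i' ≤ j → j < θ i' → T i j < T i' j) ∧
  (∀ m : ℕ, {p : ℕ × ℕ | T p.1 p.2 = m + 1}.ncard = μ m) ∧
  (∀ m i j : ℕ,
    {p : ℕ × ℕ | T p.1 p.2 = m + 2 ∧ (p.1 < i ∨ (p.1 = i ∧ j ≤ p.2))}.ncard ≤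
    {p : ℕ × ℕ | T p.1 p.2 = m + 1 ∧ (p.1 < i ∨ (p.1 = i ∧ j ≤ p.2))}.ncard)

/-- The Littlewood–Richardson coefficient `c_{μν}^θ`: the number of LR fillings
of `θ/ν` of type `μ` (equal to `0` when `ν ⊄ θ`). -/
noncomputable def lrCoeff (μ ν θ : ℕ → ℕ) : ℕ := Nat.card {T : ℕ → ℕ → ℕ // IsLRFilling θ ν μ T}


lemma shifted_strictAnti {α : ℕ → ℕ} (h : Antitone α) :
    StrictAnti (fun k => (α k : ℤ) - (k + 1)) := by
  intro a b hab
  have h2 : α b ≤ α a := h hab.le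
  simp only
  omega

lemma filter_le_card_aux {n : ℕ} {f : ℕ → ℤ} (hf : StrictAnti f) {c : ℤ} {j : ℕ}
    (hj : j < n) (hfj : f j = c) :
    ((Finset.range n).filter (fun k => c ≤ f k)).card
      = ((Finset.range n).filter (fun k => c < f k)).card + 1 := by
  have hins : (Finset.range n).filter (fun k => c ≤ f k)
      = insert j ((Finset.range n).filter (fun k => c < f k)) := by
    ext k
    simp only [Finset.mem_insert, Finset.mem_filter, Finset.mem_range]
    constructor
    · rintro ⟨hk, hle⟩
      rcases lt_or_eq_of_le hle with h | h
      · exact Or.inr ⟨hk, h⟩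
      · exact Or.inl (hf.injective (h ▸ hfj)).symm
    · rintro (rfl | ⟨hk, hlt⟩)
      · exact ⟨hj, hfj.ge⟩
      · exact ⟨hk, hlt.le⟩
  rw [hins, Finset.card_insert_of_notMem]
  simp [hfj]

lemma filter_lt_self {n : ℕ} {f : ℕ → ℤ} (hf : StrictAnti f) {i : ℕ} (hi : i ≤ n) :
    ((Finset.range n).filter (fun k => f i < f k)) = Finset.range i := by
  ext k
  simp only [Finset.mem_filter, Finset.mem_range, hf.lt_iff_gt]
  omega

lemma filter_le_self {n : ℕ} {f : ℕ → ℤ} (hf : StrictAnti f) {i : ℕ} (hi : i < n) :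
    ((Finset.range n).filter (fun k => f i ≤ f k)) = Finset.range (i + 1) := by
  ext k
  simp only [Finset.mem_filter, Finset.mem_range, hf.le_iff_ge]
  omega

/-- Recursive formula for the `*`-operation, left entry: if `μ` is obtained
from `α` by adding one cell in row `i` (0-indexed), then either some row `j`
of `ν` satisfies `ν_j − j = α_i − i`, in which case `λ` is unchanged and `ρ`
grows by one cell in row `j`, landing in column `μ_i`; or otherwise `λ` grows
by one cell in row `i` and `ρ` is unchanged. -/
theorem star_recursive_left (n : ℕ) (α ν μ : ℕ → ℕ)
    (hα : IsPartitionN n α) (hν : IsPartitionN n ν) (hμ : IsPartitionN n μ)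
    (i : ℕ) (hi : i < n)
    (hgrow : μ i = α i + 1 ∧ ∀ k, k ≠ i → μ k = α k) :
    (∀ j, j < n → (ν j : ℤ) - (j + 1) = (α i : ℤ) - (i + 1) →
      (∀ k, k < n → lamStar n μ ν k = lamStar n α ν k) ∧
      rhoStar n μ ν j = rhoStar n α ν j + 1 ∧
      rhoStar n μ ν j = (μ i : ℤ) ∧
      (∀ k, k < n → k ≠ j → rhoStar n μ ν k = rhoStar n α ν k)) ∧
    ((∀ j, j < n → (ν j : ℤ) - (j + 1) ≠ (α i : ℤ) - (i + 1)) →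
      lamStar n μ ν i = lamStar n α ν i + 1 ∧
      (∀ k, k < n → k ≠ i → lamStar n μ ν k = lamStar n α ν k) ∧
      (∀ k, k < n → rhoStar n μ ν k = rhoStar n α ν k)) := by
  obtain ⟨hαA, -⟩ := hα
  obtain ⟨hνA, -⟩ := hν
  obtain ⟨hμA, -⟩ := hμ
  obtain ⟨hμi, hμk⟩ := hgrow
  have hfα := shifted_strictAnti hαA
  have hfν := shifted_strictAnti hνA
  have hfμ := shifted_strictAnti hμA
  have hμle : ∀ a b : ℕ, ((μ a : ℤ) - (a + 1) ≤ (μ b : ℤ) - (b + 1)) ↔ b ≤ a :=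
    fun a b => hfμ.le_iff_ge
  have hαlt : ∀ a b : ℕ, ((α a : ℤ) - (a + 1) < (α b : ℤ) - (b + 1)) ↔ b < a :=
    fun a b => hfα.lt_iff_gt
  have hνinj : ∀ a b : ℕ, (ν a : ℤ) - (a + 1) = (ν b : ℤ) - (b + 1) → a = b :=
    fun a b h => hfν.injective h
  -- λ is unchanged away from row i (unconditionally)
  have lam_ne : ∀ k, k ≠ i → lamStar n μ ν k = lamStar n α ν k := by
    intro k hk
    simp [lamStar, hμk k hk]
  -- ρ is unchanged at any j with ν_j - j ≠ α_i - i
  have rho_ne : ∀ j, (ν j : ℤ) - (j + 1) ≠ (α i : ℤ) - (i + 1) →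
      rhoStar n μ ν j = rhoStar n α ν j := by
    intro j hne
    unfold rhoStar
    have heq : ((Finset.range n).filter
        (fun k => (ν j : ℤ) - (j + 1) < (μ k : ℤ) - (k + 1)))
        = ((Finset.range n).filter
          (fun k => (ν j : ℤ) - (j + 1) < (α k : ℤ) - (k + 1))) := by
      ext k
      simp only [Finset.mem_filter, Finset.mem_range]
      rcases eq_or_ne k i with rfl | hki
      · omega
      · rw [hμk k hki]
    rw [heq]
  constructor
  · intro j hj hbj
    refine ⟨?_, ?_, ?_, ?_⟩
    · intro k hk
      rcases eq_or_ne k i with rfl | hki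
      · unfold lamStar
        have h1 : ((Finset.range n).filter
            (fun j' => (μ k : ℤ) - (k + 1) ≤ (ν j' : ℤ) - (j' + 1)))
            = ((Finset.range n).filter
              (fun j' => (α k : ℤ) - (k + 1) < (ν j' : ℤ) - (j' + 1))) := by
          ext j'
          simp only [Finset.mem_filter, Finset.mem_range]
          omega
        have h2 : ((Finset.range n).filter
            (fun j' => (α k : ℤ) - (k + 1) ≤ (ν j' : ℤ) - (j' + 1))).card
            = ((Finset.range n).filter
              (fun j' => (α k : ℤ) - (k + 1) < (ν j' : ℤ) - (j' + 1))).card + 1 :=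
          filter_le_card_aux hfν hj hbj
        rw [h1]
        omega
      · exact lam_ne k hki
    · unfold rhoStar
      have h1 : ((Finset.range n).filter
          (fun k => (ν j : ℤ) - (j + 1) < (μ k : ℤ) - (k + 1)))
          = Finset.range (i + 1) := by
        ext k
        simp only [Finset.mem_filter, Finset.mem_range]
        have e1 := hμle i k
        omega
      have h2 : ((Finset.range n).filter
          (fun k => (ν j : ℤ) - (j + 1) < (α k : ℤ) - (k + 1)))
          = Finset.range i := by
        ext k
        simp only [Finset.mem_filter, Finset.mem_range]
        have e2 := hαlt i k
        omega
      rw [h1, h2, Finset.card_range, Finset.card_range]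
      push_cast
      ring
    · unfold rhoStar
      have h1 : ((Finset.range n).filter
          (fun k => (ν j : ℤ) - (j + 1) < (μ k : ℤ) - (k + 1)))
          = Finset.range (i + 1) := by
        ext k
        simp only [Finset.mem_filter, Finset.mem_range]
        have e1 := hμle i k
        omega
      rw [h1, Finset.card_range]
      omega
    · intro k hk hkj
      apply rho_ne
      intro h
      exact hkj (hνinj k j (by omega))
  · intro hall
    refine ⟨?_, fun k _ => lam_ne k, fun k hk => rho_ne k (hall k hk)⟩
    unfold lamStar
    have h1 : ((Finset.range n).filter
        (fun j' => (μ i : ℤ) - (i + 1) ≤ (ν j' : ℤ) - (j' + 1)))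
        = ((Finset.range n).filter
          (fun j' => (α i : ℤ) - (i + 1) < (ν j' : ℤ) - (j' + 1))) := by
      ext j'
      simp only [Finset.mem_filter, Finset.mem_range]
      omega
    have h2 : ((Finset.range n).filter
        (fun j' => (α i : ℤ) - (i + 1) ≤ (ν j' : ℤ) - (j' + 1)))
        = ((Finset.range n).filter
          (fun j' => (α i : ℤ) - (i + 1) < (ν j' : ℤ) - (j' + 1))) := by
      ext j'
      simp only [Finset.mem_filter, Finset.mem_range]
      constructor
      · rintro ⟨hj', hle⟩
        have := hall j' hj'
        omega
      · rintro ⟨hj', hlt⟩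
        exact ⟨hj', hlt.le⟩
    rw [h1, h2]
    omega
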